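/- Let k be a field and n ≥ 2. Consider the space of families of k-linear maps η_V : Sym^2(V) → Λ^2(V), one for each finite-dimensional k-vector space V, natural with respect to all k-linear maps V → W (i.e., η is a natural transformation of functors Sym^2 → Λ^2 on the category of finite-dimensional k-vector spaces). If char k = 2, this space is one-dimensional, spanned by the transformation sending the class of v·w to v∧w; if char k ≠ 2, this space is zero. -/

import Mathlib

open PiTensorProduct
open scoped TensorProduct

/-- Relations defining the symmetric power. -/
noncomputable def SymPow.rel (R : Type*) [CommRing R] (M : Type*) [AddCommGroup M]
    [Module R M] (n : ℕ) : Submodule R (⨂[R] (_ : Fin n), M) :=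
  Submodule.span R {x | ∃ (σ : Equiv.Perm (Fin n)) (v : Fin n → M),
    x = tprod R v - PiTensorProduct.reindex R (fun _ => M) σ (tprod R v)}

/-- The `n`-th symmetric power of an `R`-module `M`. -/
noncomputable abbrev SymPow (R : Type*) [CommRing R] (M : Type*) [AddCommGroup M]
    [Module R M] (n : ℕ) :=
  (⨂[R] (_ : Fin n), M) ⧸ SymPow.rel R M n

/-- The class of the product `v 0 ⋯ v (n-1)` in `Sym^n(M)`. -/
noncomputable def SymPow.mk (R : Type*) [CommRing R] (M : Type*) [AddCommGroup M]
    [Module R M] (n : ℕ) (v : Fin n → M) : SymPow R M n :=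
  Submodule.Quotient.mk (tprod R v)

/-- A family of linear maps `Sym²(V) → Λ²(V)`, one for each finite-dimensional
`k`-vector space. -/
abbrev SymSqToExtSqFamily (k : Type) [Field k] : Type 1 :=
  ∀ (V : Type) [AddCommGroup V] [Module k V] [FiniteDimensional k V],
    SymPow k V 2 →ₗ[k] ⋀[k]^2 V

/-- Naturality of such a family with respect to all `k`-linear maps. -/
def IsNatSymSqToExtSq (k : Type) [Field k] (η : SymSqToExtSqFamily k) : Prop :=
  ∀ (V W : Type) [AddCommGroup V] [Module k V] [FiniteDimensional k V]
    [AddCommGroup W] [Module k W] [FiniteDimensional k W]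
    (f : V →ₗ[k] W) (v : Fin 2 → V),
    (↑(η W (SymPow.mk k W 2 (f ∘ v))) : ExteriorAlgebra k W) =
      ExteriorAlgebra.map f ↑(η V (SymPow.mk k V 2 v))

namespace SymAux

variable {k : Type} [Field k]

lemma mk_comp_perm {V : Type} [AddCommGroup V] [Module k V] (v : Fin 2 → V)
    (σ : Equiv.Perm (Fin 2)) : SymPow.mk k V 2 (v ∘ σ) = SymPow.mk k V 2 v := by
  rw [SymPow.mk, SymPow.mk, Submodule.Quotient.eq]
  have hgen : (tprod k v - PiTensorProduct.reindex k (fun _ => V) σ.symm (tprod k v))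
      ∈ SymPow.rel k V 2 := Submodule.subset_span ⟨σ.symm, v, rfl⟩
  have hre : PiTensorProduct.reindex k (fun _ => V) σ.symm (tprod k v) = tprod k (v ∘ σ) := by
    rw [PiTensorProduct.reindex_tprod]
    congr
  rw [hre] at hgen
  simpa using neg_mem hgen

lemma hom_ext {V : Type} [AddCommGroup V] [Module k V] {N : Type*} [AddCommGroup N]
    [Module k N] {f g : SymPow k V 2 →ₗ[k] N}
    (h : ∀ v : Fin 2 → V, f (SymPow.mk k V 2 v) = g (SymPow.mk k V 2 v)) : f = g := by
  refine Submodule.linearMap_qext _ ?_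
  exact PiTensorProduct.ext (MultilinearMap.ext fun v => h v)

lemma update_two_zero {M : Type*} (p q r : M) : Function.update ![p, q] 0 r = ![r, q] := by
  funext i; fin_cases i <;> simp
lemma update_two_one {M : Type*} (p q r : M) : Function.update ![p, q] 1 r = ![p, r] := by
  funext i; fin_cases i <;> simp [Function.update]

lemma two_eq_matrix {M : Type*} (v : Fin 2 → M) : v = ![v 0, v 1] := by
  funext i; fin_cases i <;> rfl

lemma alt2 {M N : Type*} [AddCommGroup M] [Module k M] [AddCommGroup N] [Module k N]
    (f : M [⋀^Fin 2]→ₗ[k] N) (x y : M) (a b c d : k) :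
    f ![a • x + b • y, c • x + d • y] = (a * d - b * c) • f ![x, y] := by
  have h01 : (0 : Fin 2) ≠ 1 := by decide
  have hyx : f ![y, x] = - f ![x, y] := by
    have := f.map_swap (v := ![x, y]) h01
    have he : ![x, y] ∘ Equiv.swap (0 : Fin 2) 1 = ![y, x] := by
      funext i; fin_cases i <;> simp
    rwa [he] at this
  have e1 : ∀ p : M, f ![p, c • x + d • y] = c • f ![p, x] + d • f ![p, y] := by
    intro p
    have := f.map_update_add ![p, x] 1 (c • x) (d • y)
    rw [update_two_one, update_two_one, update_two_one] at this
    rw [this]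
    have hc := f.map_update_smul ![p, x] 1 c x
    rw [update_two_one, update_two_one] at hc
    have hd := f.map_update_smul ![p, x] 1 d y
    rw [update_two_one, update_two_one] at hd
    rw [hc, hd]
  have e0 : f ![a • x + b • y, c • x + d • y]
      = a • f ![x, c • x + d • y] + b • f ![y, c • x + d • y] := by
    have := f.map_update_add ![x, c • x + d • y] 0 (a • x) (b • y)
    rw [update_two_zero, update_two_zero, update_two_zero] at this
    rw [this]
    have ha := f.map_update_smul ![x, c • x + d • y] 0 a x
    rw [update_two_zero, update_two_zero] at ha
    have hb := f.map_update_smul ![x, c • x + d • y] 0 b y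
    rw [update_two_zero, update_two_zero] at hb
    rw [ha, hb]
  have hxx : f ![x, x] = 0 := f.map_eq_zero_of_eq _ (i := 0) (j := 1) rfl h01
  have hyy : f ![y, y] = 0 := f.map_eq_zero_of_eq _ (i := 0) (j := 1) rfl h01
  rw [e0, e1 x, e1 y, hxx, hyy, hyx]
  simp only [smul_zero, smul_add, smul_neg, smul_smul]
  module


variable {k : Type} [Field k]

/-- standard basis vectors of k². -/
def e (k : Type) [Field k] : Fin 2 → (Fin 2 → k) := fun i => Pi.single i 1

lemma w_expand (w : Fin 2 → k) : w = w 0 • e k 0 + w 1 • e k 1 := by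
  funext j; fin_cases j <;> simp [e, Pi.single_apply]

/-- the linear map k² → V sending e i to v i. -/
noncomputable def g {V : Type} [AddCommGroup V] [Module k V] (v : Fin 2 → V) :
    (Fin 2 → k) →ₗ[k] V :=
  (LinearMap.proj 0).smulRight (v 0) + (LinearMap.proj 1).smulRight (v 1)

lemma g_apply {V : Type} [AddCommGroup V] [Module k V] (v : Fin 2 → V) (w : Fin 2 → k) :
    g v w = w 0 • v 0 + w 1 • v 1 := rfl

lemma g_comp_e {V : Type} [AddCommGroup V] [Module k V] (v : Fin 2 → V) :
    g v ∘ e k = v := by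
  funext i; fin_cases i <;> simp [g_apply, e, Pi.single_apply]

/-- detection map ⋀² k² → k. -/
noncomputable def phi : ExteriorAlgebra k (Fin 2 → k) →ₗ[k] k :=
  ExteriorAlgebra.liftAlternating (fun i => match i with
    | 2 => Matrix.detRowAlternating
    | _ => 0)

lemma phi_iMulti (w : Fin 2 → (Fin 2 → k)) :
    phi (ExteriorAlgebra.ιMulti k 2 w) = Matrix.det (Matrix.of w) := by
  rw [phi, ExteriorAlgebra.liftAlternating_apply_ιMulti]
  rfl

lemma phi_iMulti_e : phi (ExteriorAlgebra.ιMulti k 2 (e k)) = 1 := by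
  rw [phi_iMulti]
  have : (Matrix.of (e k) : Matrix (Fin 2) (Fin 2) k) = 1 := by
    ext i j
    simp [e, Matrix.one_apply, Pi.single_apply, eq_comm]
  rw [this, Matrix.det_one]

lemma iMulti_e_ne_zero : (ExteriorAlgebra.ιMulti k 2 (e k)) ≠ 0 := by
  intro h
  have := phi_iMulti_e (k := k)
  rw [h, map_zero] at this
  exact one_ne_zero this.symm

/-- every ιMulti on k² is a multiple of ιMulti e. -/
lemma iMulti_mem_span (w : Fin 2 → (Fin 2 → k)) :
    ExteriorAlgebra.ιMulti k 2 w ∈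
      Submodule.span k {ExteriorAlgebra.ιMulti k 2 (e k)} := by
  have hw : ExteriorAlgebra.ιMulti k 2 w
      = (w 0 0 * w 1 1 - w 0 1 * w 1 0) • ExteriorAlgebra.ιMulti k 2 (e k) := by
    conv_lhs => rw [two_eq_matrix w, w_expand (w 0), w_expand (w 1)]
    rw [alt2, ← two_eq_matrix (e k)]
  rw [hw]
  exact Submodule.smul_mem _ _ (Submodule.subset_span rfl)

lemma extSq_elem (x : ⋀[k]^2 (Fin 2 → k)) :
    ∃ c : k, (x : ExteriorAlgebra k (Fin 2 → k)) = c • ExteriorAlgebra.ιMulti k 2 (e k) := by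
  have hx : (x : ExteriorAlgebra k (Fin 2 → k)) ∈
      Submodule.span k {ExteriorAlgebra.ιMulti k 2 (e k)} := by
    have h2 := (ExteriorAlgebra.ιMulti_span_fixedDegree k (M := Fin 2 → k) 2).ge x.2
    refine Submodule.span_le.2 ?_ h2
    rintro _ ⟨w, rfl⟩
    exact iMulti_mem_span w
  obtain ⟨c, hc⟩ := Submodule.mem_span_singleton.1 hx
  exact ⟨c, hc.symm⟩

variable {k : Type} [Field k]

/-- Any natural family takes values c • ιMulti for a fixed constant c. -/
lemma nat_value (η : SymSqToExtSqFamily k) (hη : IsNatSymSqToExtSq k η) :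
    ∃ c : k, ∀ (V : Type) [AddCommGroup V] [Module k V] [FiniteDimensional k V]
      (v : Fin 2 → V),
      (↑(η V (SymPow.mk k V 2 v)) : ExteriorAlgebra k V)
        = c • ExteriorAlgebra.ιMulti k 2 v := by
  obtain ⟨c, hc⟩ := extSq_elem (η (Fin 2 → k) (SymPow.mk k (Fin 2 → k) 2 (e k)))
  refine ⟨c, fun V _ _ _ v => ?_⟩
  have hnat := hη (Fin 2 → k) V (g v) (e k)
  rw [g_comp_e] at hnat
  rw [hnat, hc, map_smul, ExteriorAlgebra.map_apply_ιMulti, g_comp_e]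

/-- The constant c for a natural family: c • ιMulti e = value at e. -/
lemma nat_c_swap (η : SymSqToExtSqFamily k) (hη : IsNatSymSqToExtSq k η)
    {c : k} (hc : ∀ (V : Type) [AddCommGroup V] [Module k V] [FiniteDimensional k V]
      (v : Fin 2 → V),
      (↑(η V (SymPow.mk k V 2 v)) : ExteriorAlgebra k V)
        = c • ExteriorAlgebra.ιMulti k 2 v) :
    c + c = 0 := by
  have h01 : (0 : Fin 2) ≠ 1 := by decide
  have hsw : ExteriorAlgebra.ιMulti k 2 (e k ∘ Equiv.swap (0:Fin 2) 1)
      = - ExteriorAlgebra.ιMulti k 2 (e k) := AlternatingMap.map_swap _ _ h01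
  have h1 := hc (Fin 2 → k) (e k ∘ Equiv.swap 0 1)
  rw [mk_comp_perm, hc (Fin 2 → k) (e k), hsw] at h1
  have h2 : ((c + c) • ExteriorAlgebra.ιMulti k 2 (e k)
      : ExteriorAlgebra k (Fin 2 → k)) = 0 := by
    rw [add_smul]
    rw [smul_neg] at h1
    linear_combination (norm := module) h1
  have := congrArg phi h2
  rw [map_smul, phi_iMulti_e, map_zero, smul_eq_mul, mul_one] at this
  exact this

/-- The canonical map Sym²V → ⋀²V in characteristic 2. -/
noncomputable def eta0 (h2 : (2 : k) = 0) : SymSqToExtSqFamily k := fun V _ _ _ =>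
  Submodule.liftQ _ (PiTensorProduct.lift
    ((ExteriorAlgebra.ιMulti k 2 (M := V)).codRestrict (⋀[k]^2 V)
      (fun v => ExteriorAlgebra.ιMulti_range k 2 ⟨v, rfl⟩)).toMultilinearMap)
    (by
      rw [SymPow.rel, Submodule.span_le]
      rintro _ ⟨σ, v, rfl⟩
      simp only [SetLike.mem_coe, LinearMap.mem_ker, map_sub]
      have hre : PiTensorProduct.reindex k (fun _ => V) σ (tprod k v)
          = tprod k (v ∘ σ.symm) := by
        rw [PiTensorProduct.reindex_tprod]; congr
      rw [hre, PiTensorProduct.lift.tprod, PiTensorProduct.lift.tprod]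
      have hperm := ((ExteriorAlgebra.ιMulti k 2 (M := V)).codRestrict (⋀[k]^2 V)
        (fun v => ExteriorAlgebra.ιMulti_range k 2 ⟨v, rfl⟩)).map_perm v σ.symm
      simp only [AlternatingMap.coe_multilinearMap] at hperm ⊢
      rw [hperm]
      rcases Int.units_eq_one_or (Equiv.Perm.sign σ.symm) with h | h
      · rw [h, one_smul, sub_self]
      · rw [h]
        have : ∀ x : ⋀[k]^2 V, x - (-1 : ℤˣ) • x = (2 : k) • x := by
          intro x
          rw [Units.neg_smul, one_smul, sub_neg_eq_add, two_smul]
        rw [this, h2, zero_smul])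

lemma eta0_mk (h2 : (2 : k) = 0) {V : Type} [AddCommGroup V] [Module k V]
    [FiniteDimensional k V] (v : Fin 2 → V) :
    (↑(eta0 h2 V (SymPow.mk k V 2 v)) : ExteriorAlgebra k V)
      = ExteriorAlgebra.ιMulti k 2 v := by
  rw [eta0, SymPow.mk, Submodule.liftQ_apply, PiTensorProduct.lift.tprod]
  rfl
end SymAux

/-- Let `k` be a field and `n ≥ 2`.  The space of natural transformations
`Sym² → Λ²` on finite-dimensional `k`-vector spaces is one-dimensional if `char k = 2`,
spanned by the transformation sending the class of `v·w` to `v ∧ w`, and it is zero if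
`char k ≠ 2`. -/
theorem natTrans_symSq_to_extSq (k : Type) [Field k] (n : ℕ) (hn : 2 ≤ n) :
    ((ringChar k = 2) →
      ∃ η₀ : SymSqToExtSqFamily k, IsNatSymSqToExtSq k η₀ ∧
        (∀ (V : Type) [AddCommGroup V] [Module k V] [FiniteDimensional k V]
          (v : Fin 2 → V),
          (↑(η₀ V (SymPow.mk k V 2 v)) : ExteriorAlgebra k V) =
            ExteriorAlgebra.ιMulti k 2 v) ∧
        ∀ η : SymSqToExtSqFamily k, IsNatSymSqToExtSq k η →
          ∃! c : k, ∀ (V : Type) [AddCommGroup V] [Module k V] [FiniteDimensional k V],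
            η V = c • η₀ V) ∧
    ((ringChar k ≠ 2) →
      ∀ η : SymSqToExtSqFamily k, IsNatSymSqToExtSq k η →
        ∀ (V : Type) [AddCommGroup V] [Module k V] [FiniteDimensional k V], η V = 0) := by
  constructor
  · intro hchar
    have h2 : (2 : k) = 0 := by
      haveI : CharP k 2 := hchar ▸ ringChar.charP k
      exact_mod_cast CharP.cast_eq_zero k 2
    refine ⟨SymAux.eta0 h2, ?_, ?_, ?_⟩
    · intro V W _ _ _ _ _ _ f v
      rw [SymAux.eta0_mk h2, SymAux.eta0_mk h2, ExteriorAlgebra.map_apply_ιMulti]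
    · intro V _ _ _ v
      exact SymAux.eta0_mk h2 v
    · intro η hη
      obtain ⟨c, hc⟩ := SymAux.nat_value η hη
      refine ⟨c, ?_, ?_⟩
      · intro V _ _ _
        refine SymAux.hom_ext fun v => Subtype.coe_injective ?_
        show (↑(η V (SymPow.mk k V 2 v)) : ExteriorAlgebra k V)
          = ↑((c • SymAux.eta0 h2 V) (SymPow.mk k V 2 v))
        rw [LinearMap.smul_apply, Submodule.coe_smul, SymAux.eta0_mk h2, hc]
      · intro c' hc'
        have h := congrArg (fun L => ((L (SymPow.mk k (Fin 2 → k) 2 (SymAux.e k)) :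
            ⋀[k]^2 (Fin 2 → k)) : ExteriorAlgebra k (Fin 2 → k))) (hc' (Fin 2 → k))
        simp only [LinearMap.smul_apply, Submodule.coe_smul, SymAux.eta0_mk h2,
          hc (Fin 2 → k) (SymAux.e k)] at h
        have h' := congrArg SymAux.phi h
        rw [map_smul, map_smul, SymAux.phi_iMulti_e, smul_eq_mul, smul_eq_mul,
          mul_one, mul_one] at h'
        exact h'.symm
  · intro hchar η hη V _ _ _
    obtain ⟨c, hc⟩ := SymAux.nat_value η hη
    have hcc := SymAux.nat_c_swap η hη hc
    have h2 : (2 : k) ≠ 0 := fun h =>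
      hchar (CharP.ringChar_of_prime_eq_zero Nat.prime_two (by exact_mod_cast h))
    have hc0 : c = 0 := by
      have : (2 : k) * c = 0 := by rw [two_mul]; exact hcc
      rcases mul_eq_zero.1 this with h | h
      · exact absurd h h2
      · exact h
    refine SymAux.hom_ext fun v => Subtype.coe_injective ?_
    show (↑(η V (SymPow.mk k V 2 v)) : ExteriorAlgebra k V)
      = ↑((0 : SymPow k V 2 →ₗ[k] ⋀[k]^2 V) (SymPow.mk k V 2 v))
    rw [hc, hc0, zero_smul, LinearMap.zero_apply, ZeroMemClass.coe_zero]
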